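/- If e^{−τn} < 1/2, then the set R_n = {x ∈ 𝕋² : Tⁿx ∈ B(x, e^{−nτ})} is the disjoint union over x ∈ P_n of the translates (Aⁿ − I)^{−1} B(0, e^{−nτ}) + x (mod 1); in particular R_n is a disjoint union of H_n = ∏_j |λ_jⁿ − 1| ellipses centered at the n-periodic points of T. -/

import Mathlib

open Filter

noncomputable def intVec (z : Fin 2 → ℤ) : EuclideanSpace ℝ (Fin 2) :=
  (WithLp.equiv 2 (Fin 2 → ℝ)).symm fun i => (z i : ℝ)

/-- The lift to `ℝ²` of the set `P_n = (Aⁿ - I)⁻¹ ℤ² (mod 1)` of `n`-periodic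
points of `T x = A x (mod 1)`. -/
noncomputable def periodicLift (A : Matrix (Fin 2) (Fin 2) ℤ) (n : ℕ) :
    Set (EuclideanSpace ℝ (Fin 2)) :=
  {x | ∃ z : Fin 2 → ℤ,
    Matrix.toEuclideanLin ((A ^ n).map (Int.cast : ℤ → ℝ) - 1) x = intVec z}

/-- The lift to `ℝ²` of the set `R_n = {x ∈ 𝕋² : Tⁿ x ∈ B(x, e^{-nτ})}`:
`Tⁿ x ∈ B(x, e^{-nτ})` iff `‖(Aⁿ - I) x - z‖ < e^{-nτ}` for some `z ∈ ℤ²`. -/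
noncomputable def Rn (A : Matrix (Fin 2) (Fin 2) ℤ) (τ : ℝ) (n : ℕ) :
    Set (EuclideanSpace ℝ (Fin 2)) :=
  {x | ∃ z : Fin 2 → ℤ,
    ‖Matrix.toEuclideanLin ((A ^ n).map (Int.cast : ℤ → ℝ) - 1) x - intVec z‖
      < Real.exp (-(n : ℝ) * τ)}

/-- The translate by an `n`-periodic point `p` of the ellipse
`(Aⁿ - I)⁻¹ B(0, e^{-nτ})`. -/
noncomputable def ellipsePiece (A : Matrix (Fin 2) (Fin 2) ℤ) (τ : ℝ) (n : ℕ)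
    (p : EuclideanSpace ℝ (Fin 2)) : Set (EuclideanSpace ℝ (Fin 2)) :=
  {x | ‖Matrix.toEuclideanLin ((A ^ n).map (Int.cast : ℤ → ℝ) - 1) (x - p)‖
    < Real.exp (-(n : ℝ) * τ)}

open Matrix


lemma cayley2 (M : Matrix (Fin 2) (Fin 2) ℝ) : M ^ 2 = M.trace • M - M.det • 1 := by
  ext i j
  fin_cases i <;> fin_cases j <;>
    simp [pow_two, Matrix.mul_apply, Fin.sum_univ_two, Matrix.trace_fin_two,
      Matrix.det_fin_two, Matrix.sub_apply, Matrix.one_apply] <;> ring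

lemma trace_pow_eq (M : Matrix (Fin 2) (Fin 2) ℝ) (l₁ l₂ : ℝ)
    (h1 : l₁ + l₂ = M.trace) (h2 : l₁ * l₂ = M.det) (n : ℕ) :
    (M ^ n).trace = l₁ ^ n + l₂ ^ n := by
  have cay := cayley2 M
  have key : ∀ k : ℕ, (M ^ k).trace = l₁ ^ k + l₂ ^ k ∧
      (M ^ (k+1)).trace = l₁ ^ (k+1) + l₂ ^ (k+1) := by
    intro k
    induction k with
    | zero => constructor <;> simp [Matrix.trace_one, ← h1] <;> norm_num
    | succ m ih =>
      refine ⟨ih.2, ?_⟩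
      have hpow : M ^ (m + 2) = M ^ m * M ^ 2 := by rw [← pow_add]
      rw [show m + 1 + 1 = m + 2 from rfl, hpow, cay, mul_sub, Matrix.trace_sub,
        mul_smul_comm, mul_smul_comm, Matrix.trace_smul, Matrix.trace_smul, mul_one,
        ← pow_succ, ih.1, ih.2, ← h1, ← h2]
      simp only [smul_eq_mul]
      ring
  exact (key n).1

lemma det_sub_one (M : Matrix (Fin 2) (Fin 2) ℝ) :
    (M - 1).det = M.det - M.trace + 1 := by
  simp [Matrix.det_fin_two, Matrix.trace_fin_two, Matrix.sub_apply, Matrix.one_apply]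
  ring

lemma span_singleton_toAddSubgroup (a : ℤ) :
    (Ideal.span {a}).toAddSubgroup = AddSubgroup.zmultiples a := by
  ext x
  simp [Ideal.mem_span_singleton, AddSubgroup.mem_zmultiples_iff, Dvd.dvd, eq_comm, mul_comm]

lemma card_quot_eq_det (B : Matrix (Fin 2) (Fin 2) ℤ) (hB : B.det ≠ 0) :
    Nat.card ((Fin 2 → ℤ) ⧸ LinearMap.range (Matrix.toLin' B)) = B.det.natAbs := by
  classical
  set N := LinearMap.range (Matrix.toLin' B) with hN
  have hinj : Function.Injective (Matrix.toLin' B) := by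
    intro x y hxy
    have h1 : B.adjugate *ᵥ (B *ᵥ x) = B.adjugate *ᵥ (B *ᵥ y) := by
      simpa [Matrix.toLin'_apply] using congrArg (B.adjugate *ᵥ ·) hxy
    rw [Matrix.mulVec_mulVec, Matrix.mulVec_mulVec, Matrix.adjugate_mul, Matrix.smul_mulVec,
      Matrix.smul_mulVec, Matrix.one_mulVec, Matrix.one_mulVec] at h1
    funext i
    have := congrFun h1 i
    simp only [Pi.smul_apply, smul_eq_mul] at this
    exact mul_left_cancel₀ hB this
  obtain ⟨n, snf⟩ := N.smithNormalForm (Pi.basisFun ℤ (Fin 2))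
  set e : (Fin 2 → ℤ) ≃ₗ[ℤ] N := LinearEquiv.ofInjective _ hinj with he
  have hn : n = 2 := by
    have h1 : Module.finrank ℤ N = 2 := by
      rw [← e.finrank_eq]
      simp [Module.finrank_pi]
    have h2 : Module.finrank ℤ N = n := by
      rw [Module.finrank_eq_card_basis snf.bN, Fintype.card_fin]
    omega
  subst hn
  -- the index formula
  have hidx : N.toAddSubgroup.index = ∏ i : Fin 2, (snf.a i).natAbs := by
    rw [snf.toAddSubgroup_index_eq_pow_mul_prod]
    simp only [Fintype.card_fin, Nat.sub_self, pow_zero, one_mul]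
    congr 1
    funext i
    rw [span_singleton_toAddSubgroup, Int.index_zmultiples]
  have hcard : Nat.card ((Fin 2 → ℤ) ⧸ N) = N.toAddSubgroup.index := rfl
  -- determinant formula
  have hf_bij : Function.Bijective snf.f := Finite.injective_iff_bijective.mp snf.f.injective
  set g : Fin 2 ≃ Fin 2 := Equiv.ofBijective snf.f hf_bij with hg
  set e' : (Fin 2 → ℤ) ≃ₗ[ℤ] N := snf.bM.equiv snf.bN g.symm with he'
  set f1 : (Fin 2 → ℤ) →ₗ[ℤ] (Fin 2 → ℤ) := N.subtype ∘ₗ (e' : (Fin 2 → ℤ) →ₗ[ℤ] N) with hf1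
  have hval : ∀ j, f1 (snf.bM j) = snf.a (g.symm j) • snf.bM j := by
    intro j
    have h1 : f1 (snf.bM j) = ↑(snf.bN (g.symm j)) := by
      simp [hf1, he', Module.Basis.equiv_apply]
    rw [h1, snf.snf (g.symm j), show snf.f (g.symm j) = j from g.apply_symm_apply j]
  have hf1mat : LinearMap.toMatrix snf.bM snf.bM f1
      = Matrix.diagonal (fun j => snf.a (g.symm j)) := by
    ext i j
    rw [LinearMap.toMatrix_apply, hval, LinearEquiv.map_smul, Module.Basis.repr_self]
    by_cases h : i = j
    · simp [h]
    · simp only [Matrix.diagonal_apply, if_neg h, Finsupp.coe_smul, Pi.smul_apply,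
        Finsupp.single_apply, smul_eq_mul]
      rw [if_neg (fun hji => h hji.symm)]
      ring
  have hdetf1 : LinearMap.det f1 = ∏ i : Fin 2, snf.a i := by
    rw [← LinearMap.det_toMatrix snf.bM, hf1mat, Matrix.det_diagonal]
    exact Equiv.prod_comp g.symm snf.a
  have hf2 : N.subtype ∘ₗ (e : (Fin 2 → ℤ) →ₗ[ℤ] N) = Matrix.toLin' B := by
    ext x
    have hx := LinearEquiv.ofInjective_apply (f := Matrix.toLin' B) (h := hinj) (Pi.single x 1)
    exact congrFun hx _
  have hcomp : (N.subtype ∘ₗ (e : (Fin 2 → ℤ) →ₗ[ℤ] N))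
      = f1 ∘ₗ ((e.trans e'.symm : (Fin 2 → ℤ) ≃ₗ[ℤ] (Fin 2 → ℤ)) : (Fin 2 → ℤ) →ₗ[ℤ] (Fin 2 → ℤ)) := by
    ext x
    simp [f1]
  have hu : IsUnit (LinearMap.det ((e.trans e'.symm : (Fin 2 → ℤ) ≃ₗ[ℤ] (Fin 2 → ℤ))
      : (Fin 2 → ℤ) →ₗ[ℤ] (Fin 2 → ℤ))) := LinearEquiv.isUnit_det' _
  have hdetB : B.det = LinearMap.det (N.subtype ∘ₗ (e : (Fin 2 → ℤ) →ₗ[ℤ] N)) := by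
    rw [hf2, LinearMap.det_toLin']
  have h1 : (LinearMap.det ((e.trans e'.symm : (Fin 2 → ℤ) ≃ₗ[ℤ] (Fin 2 → ℤ))
      : (Fin 2 → ℤ) →ₗ[ℤ] (Fin 2 → ℤ))).natAbs = 1 := by
    rcases Int.isUnit_iff.mp hu with h | h <;> simp [h]
  have hnatAbs : B.det.natAbs = ∏ i : Fin 2, (snf.a i).natAbs := by
    rw [hdetB, hcomp, LinearMap.det_comp, Int.natAbs_mul, h1, mul_one, hdetf1,
      Fin.prod_univ_two, Fin.prod_univ_two, Int.natAbs_mul]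
  rw [hcard, hidx, hnatAbs]

lemma toEuclideanLin_eq_intVec_iff (M : Matrix (Fin 2) (Fin 2) ℝ)
    (x : EuclideanSpace ℝ (Fin 2)) (z : Fin 2 → ℤ) :
    Matrix.toEuclideanLin M x = intVec z ↔
      M *ᵥ (fun i => x i) = (fun i => (z i : ℝ)) := by
  rw [Matrix.toEuclideanLin_apply, intVec]
  exact (WithLp.toLp_injective 2).eq_iff

lemma toEuclideanLin_comp (M N : Matrix (Fin 2) (Fin 2) ℝ) (v : EuclideanSpace ℝ (Fin 2)) :
    Matrix.toEuclideanLin M (Matrix.toEuclideanLin N v) = Matrix.toEuclideanLin (M * N) v := by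
  simp only [Matrix.toEuclideanLin_apply, Equiv.apply_symm_apply, Matrix.mulVec_mulVec]

lemma toEuclideanLin_one (v : EuclideanSpace ℝ (Fin 2)) :
    Matrix.toEuclideanLin (1 : Matrix (Fin 2) (Fin 2) ℝ) v = v := by
  simp only [Matrix.toEuclideanLin_apply, Matrix.one_mulVec, Equiv.symm_apply_apply]

lemma intVec_apply (z : Fin 2 → ℤ) (i : Fin 2) : intVec z i = (z i : ℝ) := rfl

lemma coord_le_norm (x : EuclideanSpace ℝ (Fin 2)) (i : Fin 2) : |x i| ≤ ‖x‖ := by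
  rw [EuclideanSpace.norm_eq]
  have h1 : |x i| = Real.sqrt (‖x i‖ ^ 2) := by
    rw [Real.sqrt_sq_eq_abs]; simp
  rw [h1]
  apply Real.sqrt_le_sqrt
  exact Finset.single_le_sum (f := fun j => ‖x j‖ ^ 2)
    (fun j _ => by positivity) (Finset.mem_univ i)

lemma one_le_norm_intVec {z : Fin 2 → ℤ} (hz : z ≠ 0) : 1 ≤ ‖intVec z‖ := by
  obtain ⟨i, hi⟩ : ∃ i, z i ≠ 0 := by
    by_contra h
    push_neg at h
    exact hz (funext h)
  calc (1 : ℝ) ≤ |(z i : ℝ)| := by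
        rw [← Int.cast_abs]
        exact_mod_cast Int.one_le_abs hi
    _ = |intVec z i| := rfl
    _ ≤ ‖intVec z‖ := coord_le_norm _ _

lemma intVec_sub (z w : Fin 2 → ℤ) : intVec z - intVec w = intVec (z - w) := by
  ext i
  simp only [PiLp.sub_apply, intVec_apply, Pi.sub_apply, Int.cast_sub]

section parts
variable {M : Matrix (Fin 2) (Fin 2) ℝ} (hM : M.det ≠ 0)

lemma exists_inv (hM : M.det ≠ 0) (v : EuclideanSpace ℝ (Fin 2)) :
    ∃ p, Matrix.toEuclideanLin M p = v := by
  refine ⟨Matrix.toEuclideanLin M⁻¹ v, ?_⟩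
  rw [toEuclideanLin_comp, Matrix.mul_nonsing_inv _ (isUnit_iff_ne_zero.mpr hM),
    toEuclideanLin_one]

lemma lin_inj (hM : M.det ≠ 0) : Function.Injective (Matrix.toEuclideanLin M) := by
  intro x y hxy
  have h := congrArg (Matrix.toEuclideanLin M⁻¹) hxy
  rwa [toEuclideanLin_comp, toEuclideanLin_comp,
    Matrix.nonsing_inv_mul _ (isUnit_iff_ne_zero.mpr hM), toEuclideanLin_one,
    toEuclideanLin_one] at h

lemma partA (hM : M.det ≠ 0) (r : ℝ) :
    {x : EuclideanSpace ℝ (Fin 2) | ∃ z : Fin 2 → ℤ,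
        ‖Matrix.toEuclideanLin M x - intVec z‖ < r}
      = ⋃ p ∈ {x : EuclideanSpace ℝ (Fin 2) | ∃ z : Fin 2 → ℤ,
          Matrix.toEuclideanLin M x = intVec z},
          {x | ‖Matrix.toEuclideanLin M (x - p)‖ < r} := by
  ext x
  simp only [Set.mem_setOf_eq, Set.mem_iUnion, exists_prop]
  constructor
  · rintro ⟨z, hz⟩
    obtain ⟨p, hp⟩ := exists_inv hM (intVec z)
    exact ⟨p, ⟨z, hp⟩, by rwa [map_sub, hp]⟩
  · rintro ⟨p, ⟨z, hp⟩, hx⟩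
    exact ⟨z, by rwa [map_sub, hp] at hx⟩

lemma partB (hM : M.det ≠ 0) (r : ℝ) (hr : r < 1 / 2) :
    Set.PairwiseDisjoint
      {x : EuclideanSpace ℝ (Fin 2) | ∃ z : Fin 2 → ℤ,
        Matrix.toEuclideanLin M x = intVec z}
      (fun p => {x : EuclideanSpace ℝ (Fin 2) |
        ‖Matrix.toEuclideanLin M (x - p)‖ < r}) := by
  rintro p ⟨zp, hp⟩ q ⟨zq, hq⟩ hpq
  rw [Function.onFun, Set.disjoint_left]
  rintro x (hxp : _ < r) (hxq : _ < r)
  have hzz : zp ≠ zq := by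
    rintro rfl
    exact hpq (lin_inj hM (hp.trans hq.symm))
  have hnorm : ‖intVec zp - intVec zq‖ < 1 := by
    have : intVec zp - intVec zq
        = Matrix.toEuclideanLin M (x - q) - Matrix.toEuclideanLin M (x - p) := by
      rw [map_sub, map_sub, ← hp, ← hq]; abel
    rw [this]
    calc ‖_ - _‖ ≤ ‖Matrix.toEuclideanLin M (x - q)‖ + ‖Matrix.toEuclideanLin M (x - p)‖ :=
          norm_sub_le _ _
      _ < r + r := add_lt_add hxq hxp
      _ < 1 := by linarith
  rw [intVec_sub] at hnorm
  have := one_le_norm_intVec (sub_ne_zero_of_ne hzz)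
  linarith

end parts

lemma partC (B : Matrix (Fin 2) (Fin 2) ℤ) (hB : B.det ≠ 0) :
    ({x ∈ {x : EuclideanSpace ℝ (Fin 2) | ∃ z : Fin 2 → ℤ,
        Matrix.toEuclideanLin (B.map (Int.cast : ℤ → ℝ)) x = intVec z} |
      ∀ i, x i ∈ Set.Ico (0:ℝ) 1}).ncard = B.det.natAbs := by
  classical
  set Br : Matrix (Fin 2) (Fin 2) ℝ := B.map (Int.cast : ℤ → ℝ) with hBr
  have hdetBr : Br.det = (B.det : ℝ) := ((Int.castRingHom ℝ).map_det B).symm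
  have hdet0 : Br.det ≠ 0 := by
    rw [hdetBr]
    exact_mod_cast hB
  have hU : IsUnit Br.det := isUnit_iff_ne_zero.mpr hdet0
  have hBBinv : ∀ v : Fin 2 → ℝ, Br *ᵥ (Br⁻¹ *ᵥ v) = v := by
    intro v
    rw [Matrix.mulVec_mulVec, Matrix.mul_nonsing_inv _ hU, Matrix.one_mulVec]
  have hBinvB : ∀ v : Fin 2 → ℝ, Br⁻¹ *ᵥ (Br *ᵥ v) = v := by
    intro v
    rw [Matrix.mulVec_mulVec, Matrix.nonsing_inv_mul _ hU, Matrix.one_mulVec]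
  have cast_mulVec : ∀ w : Fin 2 → ℤ,
      (fun i => ((B *ᵥ w) i : ℝ)) = Br *ᵥ (fun i => (w i : ℝ)) := by
    intro w
    funext i
    simp only [Matrix.mulVec, dotProduct, Fin.sum_univ_two, hBr, Matrix.map_apply]
    push_cast
    ring
  set S : Set (EuclideanSpace ℝ (Fin 2)) :=
    {x ∈ {x : EuclideanSpace ℝ (Fin 2) | ∃ z : Fin 2 → ℤ,
        Matrix.toEuclideanLin Br x = intVec z} |
      ∀ i, x i ∈ Set.Ico (0:ℝ) 1} with hS
  set N : Submodule ℤ (Fin 2 → ℤ) := LinearMap.range (Matrix.toLin' B) with hN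
  -- the lifting map
  set y : (Fin 2 → ℤ) → (Fin 2 → ℝ) := fun z => Br⁻¹ *ᵥ (fun j => (z j : ℝ)) with hy
  set q : (Fin 2 → ℤ) → EuclideanSpace ℝ (Fin 2) :=
    fun z => (WithLp.equiv 2 (Fin 2 → ℝ)).symm (fun i => Int.fract (y z i)) with hq
  have hq_coord : ∀ z i, q z i = Int.fract (y z i) := fun z i => rfl
  have hq_mem : ∀ z : Fin 2 → ℤ, q z ∈ S := by
    intro z
    refine ⟨⟨z - B *ᵥ (fun i => ⌊y z i⌋), ?_⟩, fun i => ⟨Int.fract_nonneg _, Int.fract_lt_one _⟩⟩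
    rw [toEuclideanLin_eq_intVec_iff]
    have hcoord : (fun i => q z i) = y z - (fun i => ((⌊y z i⌋ : ℤ) : ℝ)) := by
      funext i
      rw [Pi.sub_apply, hq_coord]
      exact (Int.self_sub_floor _).symm
    rw [hcoord, Matrix.mulVec_sub, hy, hBBinv, ← cast_mulVec]
    funext i
    push_cast
    simp
  -- q z = q z' iff z - z' ∈ N
  have hq_iff : ∀ z z' : Fin 2 → ℤ, q z = q z' ↔ z - z' ∈ N := by
    intro z z'
    constructor
    · intro h
      have hfr : ∀ i, Int.fract (y z i) = Int.fract (y z' i) := by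
        intro i
        have := congrArg (fun v : EuclideanSpace ℝ (Fin 2) => v i) h
        simpa [hq_coord] using this
      set w : Fin 2 → ℤ := fun i => ⌊y z i⌋ - ⌊y z' i⌋ with hw
      have hyy : y z - y z' = fun i => (w i : ℝ) := by
        funext i
        have h1 := hfr i
        simp only [Int.fract] at h1
        simp only [Pi.sub_apply, hw]
        push_cast
        linarith
      refine ⟨w, ?_⟩
      rw [Matrix.toLin'_apply]
      have hcz : (fun i => ((z - z') i : ℝ)) = Br *ᵥ (fun i => (w i : ℝ)) := by
        have h2 : Br *ᵥ (y z) - Br *ᵥ (y z') = Br *ᵥ (y z - y z') := (Matrix.mulVec_sub _ _ _).symm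
        rw [hyy] at h2
        rw [← h2, hy, hBBinv, hBBinv]
        funext i
        push_cast
        simp
      rw [← cast_mulVec] at hcz
      funext i
      have := congrFun hcz i
      exact_mod_cast this.symm
    · rintro ⟨w, hw⟩
      have hzz : z - z' = B *ᵥ w := by rw [← hw, Matrix.toLin'_apply]
      have h1 : (fun j => (z j : ℝ)) = (fun j => (z' j : ℝ)) + Br *ᵥ (fun i => (w i : ℝ)) := by
        rw [← cast_mulVec]
        funext j
        have h2 := congrFun hzz j
        simp only [Pi.sub_apply] at h2
        have h3 : (z j : ℝ) - (z' j : ℝ) = ((B *ᵥ w) j : ℝ) := by exact_mod_cast congrArg (Int.cast : ℤ → ℝ) h2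
        simp only [Pi.add_apply]
        linarith
      have hyy : y z = y z' + fun i => ((w i : ℤ) : ℝ) := by
        rw [hy]
        simp only
        rw [h1, Matrix.mulVec_add, hBinvB]
      rw [hq]
      simp only
      congr 1
      funext i
      rw [hyy]
      simp only [Pi.add_apply]
      exact Int.fract_add_intCast _ _
  -- build the bijection with the quotient
  have resp : ∀ a b : Fin 2 → ℤ, N.quotientRel a b →
      (⟨q a, hq_mem a⟩ : S) = ⟨q b, hq_mem b⟩ := by
    intro a b hab
    exact Subtype.ext ((hq_iff a b).mpr ((Submodule.quotientRel_def N).mp hab))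
  set F : ((Fin 2 → ℤ) ⧸ N) → S :=
    fun x => Quotient.liftOn' x (fun z => (⟨q z, hq_mem z⟩ : S)) resp with hF
  have hFmk : ∀ z : Fin 2 → ℤ, F (Submodule.Quotient.mk z) = ⟨q z, hq_mem z⟩ :=
    fun z => rfl
  have hFinj : Function.Injective F := by
    intro u v huv
    obtain ⟨a, rfl⟩ := Submodule.Quotient.mk_surjective N u
    obtain ⟨b, rfl⟩ := Submodule.Quotient.mk_surjective N v
    rw [hFmk, hFmk] at huv
    rw [Submodule.Quotient.eq]
    exact (hq_iff a b).mp (Subtype.ext_iff.mp huv)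
  have hFsurj : Function.Surjective F := by
    rintro ⟨x, ⟨z, hz⟩, hico⟩
    refine ⟨Submodule.Quotient.mk z, ?_⟩
    rw [hFmk]
    apply Subtype.ext
    have hx : Br *ᵥ (fun i => x i) = fun i => (z i : ℝ) :=
      (toEuclideanLin_eq_intVec_iff Br x z).mp hz
    have hyx : y z = fun i => x i := by
      rw [hy]
      simp only
      rw [← hx, hBinvB]
    show (WithLp.equiv 2 (Fin 2 → ℝ)).symm (fun i => Int.fract (y z i)) = x
    have : (fun i => Int.fract (y z i)) = fun i => x i := by
      funext i
      rw [hyx]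
      exact Int.fract_eq_self.mpr ⟨(hico i).1, (hico i).2⟩
    rw [this]
    rfl
  calc S.ncard = Nat.card S := (Nat.card_coe_set_eq S).symm
    _ = Nat.card ((Fin 2 → ℤ) ⧸ N) :=
        Nat.card_congr (Equiv.ofBijective F ⟨hFinj, hFsurj⟩).symm
    _ = B.det.natAbs := card_quot_eq_det B hB


/-- If `e^{-τ n} < 1/2` then `R_n` is the disjoint union, over the `n`-periodic
points, of the translates of the ellipse `(Aⁿ - I)⁻¹ B(0, e^{-nτ})`; the number
of such ellipses (mod 1, i.e. with centres in `[0,1)²`) is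
`H_n = |λ₁ⁿ - 1| · |λ₂ⁿ - 1|`. -/
theorem Rn_eq_disjoint_union_ellipses (A : Matrix (Fin 2) (Fin 2) ℤ)
    (l₁ l₂ : ℝ)
    (hsum : l₁ + l₂ = (A.trace : ℝ)) (hprod : l₁ * l₂ = (A.det : ℝ))
    (h0 : 0 < |l₁|) (h1 : |l₁| < 1) (h2 : 1 < |l₂|)
    (τ : ℝ) (hτ : 0 < τ) (n : ℕ) (hn : 1 ≤ n)
    (hsmall : Real.exp (-(n : ℝ) * τ) < 1 / 2) :
    (Rn A τ n = ⋃ p ∈ periodicLift A n, ellipsePiece A τ n p) ∧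
    (periodicLift A n).PairwiseDisjoint (ellipsePiece A τ n) ∧
    (({x ∈ periodicLift A n | ∀ i, x i ∈ Set.Ico (0 : ℝ) 1}).ncard : ℝ)
      = |l₁ ^ n - 1| * |l₂ ^ n - 1| := by
  have hAtr : (A.map (Int.cast : ℤ → ℝ)).trace = (A.trace : ℝ) := by
    simp [Matrix.trace_fin_two, Matrix.map_apply]
  have hAdet : (A.map (Int.cast : ℤ → ℝ)).det = (A.det : ℝ) := by
    simp [Matrix.det_fin_two, Matrix.map_apply]
  have hpowmap : (A ^ n).map (Int.cast : ℤ → ℝ) = (A.map (Int.cast : ℤ → ℝ)) ^ n := by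
    have := map_pow ((Int.castRingHom ℝ).mapMatrix) A n
    simpa [RingHom.mapMatrix_apply] using this
  have htr : ((A.map (Int.cast : ℤ → ℝ)) ^ n).trace = l₁ ^ n + l₂ ^ n :=
    trace_pow_eq _ _ _ (hsum.trans hAtr.symm) (hprod.trans hAdet.symm) n
  have hdetn : ((A.map (Int.cast : ℤ → ℝ)) ^ n).det = (l₁ * l₂) ^ n := by
    rw [Matrix.det_pow, hAdet, ← hprod]
  have hdetM : ((A ^ n).map (Int.cast : ℤ → ℝ) - 1).det = (l₁ ^ n - 1) * (l₂ ^ n - 1) := by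
    rw [hpowmap, det_sub_one, htr, hdetn]
    ring
  have hl1 : l₁ ^ n - 1 ≠ 0 := by
    intro h
    have h1n : |l₁ ^ n| < 1 := by
      rw [abs_pow]
      calc |l₁| ^ n ≤ |l₁| ^ 1 := pow_le_pow_of_le_one (abs_nonneg _) h1.le hn
        _ = |l₁| := pow_one _
        _ < 1 := h1
    rw [sub_eq_zero] at h
    rw [h] at h1n
    simp at h1n
  have hl2 : l₂ ^ n - 1 ≠ 0 := by
    intro h
    have h2n : 1 < |l₂ ^ n| := by
      rw [abs_pow]
      calc (1 : ℝ) < |l₂| := h2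
        _ = |l₂| ^ 1 := (pow_one _).symm
        _ ≤ |l₂| ^ n := pow_le_pow_right₀ h2.le hn
    rw [sub_eq_zero] at h
    rw [h] at h2n
    simp at h2n
  have hdet0 : ((A ^ n).map (Int.cast : ℤ → ℝ) - 1).det ≠ 0 := by
    rw [hdetM]
    exact mul_ne_zero hl1 hl2
  have hmap : (A ^ n - 1 : Matrix (Fin 2) (Fin 2) ℤ).map (Int.cast : ℤ → ℝ)
      = (A ^ n).map (Int.cast : ℤ → ℝ) - 1 := by
    ext i j
    simp [Matrix.map_apply, Matrix.sub_apply, Matrix.one_apply, apply_ite (Int.cast : ℤ → ℝ)]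
  have hdetZR : (((A ^ n - 1 : Matrix (Fin 2) (Fin 2) ℤ).det : ℤ) : ℝ)
      = (l₁ ^ n - 1) * (l₂ ^ n - 1) := by
    rw [show (((A ^ n - 1 : Matrix (Fin 2) (Fin 2) ℤ).det : ℤ) : ℝ)
        = ((A ^ n - 1 : Matrix (Fin 2) (Fin 2) ℤ).map (Int.cast : ℤ → ℝ)).det
      from (Int.castRingHom ℝ).map_det _, hmap, hdetM]
  have hdetZ0 : (A ^ n - 1 : Matrix (Fin 2) (Fin 2) ℤ).det ≠ 0 := by
    intro h
    rw [h] at hdetZR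
    exact (mul_ne_zero hl1 hl2) (by exact_mod_cast hdetZR.symm)
  refine ⟨partA hdet0 _, partB hdet0 _ hsmall, ?_⟩
  have hC := partC (A ^ n - 1) hdetZ0
  rw [hmap] at hC
  have hgoal : ({x ∈ periodicLift A n | ∀ i, x i ∈ Set.Ico (0 : ℝ) 1}).ncard
      = (A ^ n - 1 : Matrix (Fin 2) (Fin 2) ℤ).det.natAbs := hC
  rw [hgoal, Nat.cast_natAbs]
  rw [Int.cast_abs, hdetZR, abs_mul]
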